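/- For m ≥ 1, r ≥ 0 and n ≥ k ≥ 0, the degenerate Whitney number satisfies W_{m,r}(n,k|λ) = (1/(k! m^k)) ∑_{j=0}^n λ^{n-j} S_1(n,j) m^j Δ^k (r/m)^j, where Δ^k (r/m)^j = ∑_{l=0}^k C(k,l)(-1)^{k-l}(l + r/m)^j and S_1(n,j) is the signed Stirling number of the first kind. -/

import Mathlib

open Finset

/-- Signed Stirling numbers of the first kind: `(x)_n = ∑_m S_1(n,m) x^m`. -/
def S1 : ℕ → ℕ → ℤ
  | 0, 0 => 1
  | 0, _ + 1 => 0
  | n + 1, 0 => -(n : ℤ) * S1 n 0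
  | n + 1, k + 1 => S1 n k - (n : ℤ) * S1 n (k + 1)

/-- The λ-binomial coefficient `binom_λ(y,n) = y(y-λ)⋯(y-(n-1)λ)/n!`. -/
noncomputable def dbinom (lam y : ℝ) (n : ℕ) : ℝ :=
  (∏ i ∈ range n, (y - i * lam)) / n.factorial

/-- Degenerate Whitney numbers:
`W_{m,r}(n,k|λ) = (n!/(k! m^k)) ∑_{l=0}^k C(k,l)(-1)^{k-l} binom_λ(ml+r,n)`. -/
noncomputable def whitneyDeg (lam : ℝ) (m r n k : ℕ) : ℝ :=
  (n.factorial : ℝ) / ((k.factorial : ℝ) * (m : ℝ) ^ k) *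
    ∑ l ∈ range (k + 1), (k.choose l : ℝ) * (-1) ^ (k - l) * dbinom lam (m * l + r) n

lemma S1_zero_of_lt : ∀ n j : ℕ, n < j → S1 n j = 0 := by
  intro n
  induction n with
  | zero => intro j hj; cases j with
    | zero => omega
    | succ j => simp [S1]
  | succ n ih =>
    intro j hj
    cases j with
    | zero => omega
    | succ j =>
      have h1 : S1 n j = 0 := ih j (by omega)
      have h2 : S1 n (j+1) = 0 := ih (j+1) (by omega)
      simp [S1, h1, h2]

lemma prod_S1 (lam y : ℝ) : ∀ n : ℕ,
    ∏ i ∈ range n, (y - i * lam) = ∑ j ∈ range (n + 1), lam ^ (n - j) * (S1 n j : ℝ) * y ^ j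
  | 0 => by simp [S1]
  | n + 1 => by
    rw [prod_range_succ, prod_S1 lam y n]
    rw [Finset.sum_range_succ' (fun j => lam ^ (n + 1 - j) * (S1 (n+1) j : ℝ) * y ^ j) (n+1)]
    have hS0 : (S1 (n+1) 0 : ℝ) = -(n : ℝ) * S1 n 0 := by push_cast [S1]; ring
    have hSs : ∀ j : ℕ, (S1 (n+1) (j+1) : ℝ) = (S1 n j : ℝ) - (n : ℝ) * S1 n (j+1) := by
      intro j; push_cast [S1]; ring
    have step : ∀ j ∈ range (n+1),
        lam ^ (n + 1 - (j+1)) * (S1 (n+1) (j+1) : ℝ) * y ^ (j+1)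
          = lam ^ (n - j) * (S1 n j : ℝ) * y ^ j * y
            - (n : ℝ) * (lam ^ (n - j) * (S1 n (j+1) : ℝ) * y ^ (j+1)) := by
      intro j hj
      have : n + 1 - (j+1) = n - j := by omega
      rw [this, hSs j]; ring
    rw [Finset.sum_congr rfl step, Finset.sum_sub_distrib]
    -- now handle the remaining parts
    have last : (n : ℝ) * (lam ^ (n - n) * (S1 n (n+1) : ℝ) * y ^ (n+1)) = 0 := by
      simp [S1_zero_of_lt n (n+1) (by omega)]
    rw [Finset.sum_range_succ (fun j => (n : ℝ) * (lam ^ (n - j) * (S1 n (j+1) : ℝ) * y ^ (j+1))) n,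
        last, add_zero]
    have expand : (∑ j ∈ range (n+1), lam ^ (n - j) * (S1 n j : ℝ) * y ^ j) * (y - n * lam)
        = (∑ j ∈ range (n+1), lam ^ (n - j) * (S1 n j : ℝ) * y ^ j * y)
          - (n : ℝ) * lam * (∑ j ∈ range (n+1), lam ^ (n - j) * (S1 n j : ℝ) * y ^ j) := by
      rw [Finset.sum_mul]; rw [Finset.mul_sum]; rw [← Finset.sum_sub_distrib]
      exact Finset.sum_congr rfl (by intro j hj; push_cast; ring)
    rw [expand]
    rw [Finset.sum_range_succ' (fun j => lam ^ (n - j) * (S1 n j : ℝ) * y ^ j) n]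
    have peel : (n : ℝ) * lam *
        ((∑ j ∈ range n, lam ^ (n - (j+1)) * (S1 n (j+1) : ℝ) * y ^ (j+1))
          + lam ^ (n - 0) * (S1 n 0 : ℝ) * y ^ 0)
        = (∑ j ∈ range n, (n : ℝ) * (lam ^ (n - j) * (S1 n (j+1) : ℝ) * y ^ (j+1)))
          - lam ^ (n + 1 - 0) * (S1 (n+1) 0 : ℝ) * y ^ 0 := by
      rw [mul_add, Finset.mul_sum, hS0]
      have : ∀ j ∈ range n, (n : ℝ) * lam * (lam ^ (n - (j+1)) * (S1 n (j+1) : ℝ) * y ^ (j+1))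
          = (n : ℝ) * (lam ^ (n - j) * (S1 n (j+1) : ℝ) * y ^ (j+1)) := by
        intro j hj
        simp only [mem_range] at hj
        have h : n - j = (n - (j+1)) + 1 := by omega
        rw [h, pow_succ]; ring
      rw [Finset.sum_congr rfl this]
      have h2 : n + 1 - 0 = (n - 0) + 1 := by omega
      rw [h2, pow_succ]; ring
    rw [peel]; ring


/-- For `m ≥ 1`, `r ≥ 0` and `n ≥ k`:
`W_{m,r}(n,k|λ) = (1/(k! m^k)) ∑_{j=0}^n λ^{n-j} S_1(n,j) m^j Δ^k (r/m)^j`, where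
`Δ^k (r/m)^j = ∑_{l=0}^k C(k,l)(-1)^{k-l}(l + r/m)^j`. -/
theorem stmt14 (lam : ℝ) (m r n k : ℕ) (hm : 1 ≤ m) (hkn : k ≤ n) :
    whitneyDeg lam m r n k =
      (1 / ((k.factorial : ℝ) * (m : ℝ) ^ k)) *
        ∑ j ∈ range (n + 1),
          lam ^ (n - j) * (S1 n j : ℝ) * (m : ℝ) ^ j *
            ∑ l ∈ range (k + 1),
              (k.choose l : ℝ) * (-1) ^ (k - l) * ((l : ℝ) + (r : ℝ) / (m : ℝ)) ^ j := by
  have hm0 : (m : ℝ) ≠ 0 := Nat.cast_ne_zero.2 (by omega)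
  have hfac : (n.factorial : ℝ) ≠ 0 := Nat.cast_ne_zero.2 n.factorial_ne_zero
  have rhs : (∑ j ∈ range (n + 1),
          lam ^ (n - j) * (S1 n j : ℝ) * (m : ℝ) ^ j *
            ∑ l ∈ range (k + 1),
              (k.choose l : ℝ) * (-1) ^ (k - l) * ((l : ℝ) + (r : ℝ) / (m : ℝ)) ^ j)
      = ∑ l ∈ range (k + 1), (k.choose l : ℝ) * (-1) ^ (k - l) *
          ∏ i ∈ range n, ((m : ℝ) * l + r - i * lam) := by
    have step1 : ∀ j ∈ range (n+1),
        lam ^ (n - j) * (S1 n j : ℝ) * (m : ℝ) ^ j *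
            ∑ l ∈ range (k + 1),
              (k.choose l : ℝ) * (-1) ^ (k - l) * ((l : ℝ) + (r : ℝ) / (m : ℝ)) ^ j
        = ∑ l ∈ range (k + 1),
            (k.choose l : ℝ) * (-1) ^ (k - l) *
              (lam ^ (n - j) * (S1 n j : ℝ) * ((m : ℝ) * l + r) ^ j) := by
      intro j _
      rw [Finset.mul_sum]
      refine Finset.sum_congr rfl fun l _ => ?_
      have hml : ((m : ℝ) * l + r) = (m : ℝ) * ((l : ℝ) + (r : ℝ) / (m : ℝ)) := by
        field_simp
      rw [hml, mul_pow]
      ring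
    rw [Finset.sum_congr rfl step1, Finset.sum_comm]
    refine Finset.sum_congr rfl fun l _ => ?_
    rw [← Finset.mul_sum, ← prod_S1]
  rw [rhs]
  unfold whitneyDeg dbinom
  rw [Finset.mul_sum, Finset.mul_sum]
  refine Finset.sum_congr rfl fun l _ => ?_
  field_simp
  ring
  congr 1; exact Finset.prod_congr rfl fun x _ => by ring
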